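/- arXiv:2205.05505 — 2 statements merged into one kernel-verified Lean document; each statement's English description precedes it below -/
import Mathlib

section
/- Let X₁, X₂ be independent truncated normals on [L₁, U₁] and [L₂, U₂] with 0 < Lₖ < Uₖ, as above. Then for p ∈ [L₁L₂, U₁U₂], P(X₁X₂ ≤ p) = D₁D₂ [ Φ₂(U₂)(Φ₁(α(p)) − Φ₁(L₁)) + Φ₂(L₂)(Φ₁(L₁) − Φ₁(β(p))) + ∫_{α(p)}^{β(p)} φ₁(ζ) Φ₂(p/ζ) dζ ] (up to the normalizing constants being applied consistently), where Φₖ = Φ_{μₖ',σₖ}, φ₁ = φ_{μ₁',σ₁}, and α, β are the integration bounds from the piecewise definition. -/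
open MeasureTheory ProbabilityTheory Real

/-- The Gaussian PDF with mean `μ` and standard deviation `σ`. -/
noncomputable def phi (μ σ x : ℝ) : ℝ := gaussianPDFReal μ ⟨σ ^ 2, sq_nonneg σ⟩ x

/-- The Gaussian CDF with mean `μ` and standard deviation `σ`. -/
noncomputable def Phi (μ σ x : ℝ) : ℝ := ∫ t in Set.Iic x, phi μ σ t

lemma phi_nonneg (μ σ x : ℝ) : 0 ≤ phi μ σ x := gaussianPDFReal_nonneg _ _ _

lemma phi_pos (μ σ x : ℝ) (hσ : 0 < σ) : 0 < phi μ σ x := by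
  refine gaussianPDFReal_pos _ _ _ ?_
  intro h
  have : σ ^ 2 = 0 := congrArg NNReal.toReal h
  nlinarith

lemma measurable_phi (μ σ : ℝ) : Measurable (phi μ σ) := measurable_gaussianPDFReal _ _

lemma continuous_phi (μ σ : ℝ) : Continuous (phi μ σ) := by
  unfold phi gaussianPDFReal
  fun_prop

lemma integrable_phi (μ σ : ℝ) : Integrable (phi μ σ) := integrable_gaussianPDFReal _ _

lemma Phi_interval (μ σ a b : ℝ) : ∫ t in a..b, phi μ σ t = Phi μ σ b - Phi μ σ a := by
  rw [← intervalIntegral.integral_Iic_sub_Iic ((integrable_phi μ σ).integrableOn)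
    ((integrable_phi μ σ).integrableOn)]
  rfl

lemma continuous_Phi (μ σ : ℝ) : Continuous (Phi μ σ) := by
  have h : ∀ x, Phi μ σ x = Phi μ σ 0 + ∫ t in (0:ℝ)..x, phi μ σ t := by
    intro x; rw [Phi_interval]; ring
  have : Phi μ σ = fun x => Phi μ σ 0 + ∫ t in (0:ℝ)..x, phi μ σ t := funext h
  rw [this]
  exact continuous_const.add ((integrable_phi μ σ).continuous_primitive 0)

lemma Phi_lt (μ σ : ℝ) (hσ : 0 < σ) {a b : ℝ} (h : a < b) : Phi μ σ a < Phi μ σ b := by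
  have := intervalIntegral.intervalIntegral_pos_of_pos (f := phi μ σ)
    ((integrable_phi μ σ).intervalIntegrable) (fun x => phi_pos μ σ x hσ) h
  rw [Phi_interval] at this; linarith

lemma Phi_mono (μ σ : ℝ) {a b : ℝ} (h : a ≤ b) : Phi μ σ a ≤ Phi μ σ b := by
  have := intervalIntegral.integral_nonneg (μ := volume) h (fun x _ => phi_nonneg μ σ x)
  rw [Phi_interval] at this; linarith

lemma Phi_Icc (μ σ : ℝ) {a b : ℝ} (h : a ≤ b) :
    ∫ t in Set.Icc a b, phi μ σ t = Phi μ σ b - Phi μ σ a := by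
  rw [← Phi_interval, intervalIntegral.integral_of_le h,
    MeasureTheory.integral_Ioc_eq_integral_Ioo, MeasureTheory.integral_Icc_eq_integral_Ioo]

lemma lint_Icc (μ σ D : ℝ) (hD : 0 ≤ D) {L c : ℝ} (h : L ≤ c) :
    ∫⁻ x in Set.Icc L c, ENNReal.ofReal (D * phi μ σ x) =
      ENNReal.ofReal (D * (Phi μ σ c - Phi μ σ L)) := by
  rw [← ofReal_integral_eq_lintegral_ofReal
    (((integrable_phi μ σ).const_mul D).integrableOn)
    (ae_of_all _ fun x => mul_nonneg hD (phi_nonneg μ σ x))]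
  rw [MeasureTheory.integral_const_mul, Phi_Icc μ σ h]

lemma ind_ofReal (μ σ L U D : ℝ) (x : ℝ) :
    ENNReal.ofReal ((Set.Icc L U).indicator (fun t => D * phi μ σ t) x) =
      (Set.Icc L U).indicator (fun t => ENNReal.ofReal (D * phi μ σ t)) x := by
  by_cases hx : x ∈ Set.Icc L U <;> simp [hx]

lemma nu_meas (μ σ L U D : ℝ) {s : Set ℝ} (hs : MeasurableSet s) :
    (volume.withDensity fun x =>
        ENNReal.ofReal ((Set.Icc L U).indicator (fun t => D * phi μ σ t) x)) s =
      ∫⁻ x in Set.Icc L U ∩ s, ENNReal.ofReal (D * phi μ σ x) := by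
  rw [withDensity_apply _ hs]
  simp_rw [ind_ofReal]
  rw [lintegral_indicator measurableSet_Icc, Measure.restrict_restrict measurableSet_Icc]

lemma nu_Iic (μ σ L U D : ℝ) (hD : 0 ≤ D) {c : ℝ} (hLc : L ≤ c) (hcU : c ≤ U) :
    (volume.withDensity fun x =>
        ENNReal.ofReal ((Set.Icc L U).indicator (fun t => D * phi μ σ t) x)) (Set.Iic c) =
      ENNReal.ofReal (D * (Phi μ σ c - Phi μ σ L)) := by
  have hset : Set.Icc L U ∩ Set.Iic c = Set.Icc L c := by
    ext x
    simp only [Set.mem_inter_iff, Set.mem_Icc, Set.mem_Iic]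
    constructor
    · rintro ⟨⟨h1, _⟩, h2⟩; exact ⟨h1, h2⟩
    · rintro ⟨h1, h2⟩; exact ⟨⟨h1, h2.trans hcU⟩, h2⟩
  rw [nu_meas _ _ _ _ _ measurableSet_Iic, hset, lint_Icc μ σ D hD hLc]

lemma nu_Iic_zero (μ σ L U D : ℝ) {c : ℝ} (hc : c ≤ L) :
    (volume.withDensity fun x =>
        ENNReal.ofReal ((Set.Icc L U).indicator (fun t => D * phi μ σ t) x)) (Set.Iic c) = 0 := by
  have h1 : (volume.withDensity fun x =>
      ENNReal.ofReal ((Set.Icc L U).indicator (fun t => D * phi μ σ t) x)) (Set.Iic L) = 0 := by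
    rw [nu_meas _ _ _ _ _ measurableSet_Iic]
    have hsub : Set.Icc L U ∩ Set.Iic L ⊆ {L} := by
      rintro x ⟨⟨h1, _⟩, h2⟩; exact le_antisymm h2 h1
    have : volume (Set.Icc L U ∩ Set.Iic L) = 0 :=
      le_antisymm ((measure_mono hsub).trans_eq (measure_singleton L)) zero_le
    rw [Measure.restrict_eq_zero.mpr this, lintegral_zero_measure]
  exact le_antisymm (h1 ▸ measure_mono (Set.Iic_subset_Iic.mpr hc)) zero_le

lemma nu_univ (μ σ L U D : ℝ) (hD : 0 ≤ D) (h : L ≤ U) :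
    (volume.withDensity fun x =>
        ENNReal.ofReal ((Set.Icc L U).indicator (fun t => D * phi μ σ t) x)) Set.univ =
      ENNReal.ofReal (D * (Phi μ σ U - Phi μ σ L)) := by
  rw [nu_meas _ _ _ _ _ MeasurableSet.univ, Set.inter_univ, lint_Icc μ σ D hD h]

/-- The CDF of the product `X₁X₂` of two independent truncated normals: for
`p ∈ [L₁L₂, U₁U₂]` (in the case `L₁U₂ < U₁L₂`),
`P(X₁X₂ ≤ p) = D₁D₂ [Φ₂(U₂)(Φ₁(α(p)) − Φ₁(L₁)) + Φ₂(L₂)(Φ₁(L₁) − Φ₁(β(p)))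
  + ∫_{α(p)}^{β(p)} φ₁(ζ) Φ₂(p/ζ) dζ]`. -/
theorem cdf_product_truncated_normal {Ω : Type*} [MeasureSpace Ω]
    [IsProbabilityMeasure (ℙ : Measure Ω)]
    (X₁ X₂ : Ω → ℝ) (hm₁ : Measurable X₁) (hm₂ : Measurable X₂)
    (hindep : IndepFun X₁ X₂)
    (μ₁' μ₂' σ₁ σ₂ L₁ U₁ L₂ U₂ D₁ D₂ : ℝ)
    (hσ₁ : 0 < σ₁) (hσ₂ : 0 < σ₂)
    (hL₁ : 0 < L₁) (hU₁ : L₁ < U₁) (hL₂ : 0 < L₂) (hU₂ : L₂ < U₂)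
    (hD₁ : D₁ = (Phi μ₁' σ₁ U₁ - Phi μ₁' σ₁ L₁)⁻¹)
    (hD₂ : D₂ = (Phi μ₂' σ₂ U₂ - Phi μ₂' σ₂ L₂)⁻¹)
    (hlaw₁ : Measure.map X₁ ℙ = volume.withDensity fun x =>
      ENNReal.ofReal ((Set.Icc L₁ U₁).indicator (fun t => D₁ * phi μ₁' σ₁ t) x))
    (hlaw₂ : Measure.map X₂ ℙ = volume.withDensity fun x =>
      ENNReal.ofReal ((Set.Icc L₂ U₂).indicator (fun t => D₂ * phi μ₂' σ₂ t) x))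
    (hcross : L₁ * U₂ < U₁ * L₂)
    (α β : ℝ → ℝ)
    (hα : ∀ p, α p = if p < L₁ * U₂ then L₁ else p / U₂)
    (hβ : ∀ p, β p = if p < U₁ * L₂ then p / L₂ else U₁) :
    ∀ p ∈ Set.Icc (L₁ * L₂) (U₁ * U₂),
      (ℙ {ω | X₁ ω * X₂ ω ≤ p}).toReal =
        D₁ * D₂ *
          (Phi μ₂' σ₂ U₂ * (Phi μ₁' σ₁ (α p) - Phi μ₁' σ₁ L₁) +
            Phi μ₂' σ₂ L₂ * (Phi μ₁' σ₁ L₁ - Phi μ₁' σ₁ (β p)) +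
            ∫ ζ in (α p)..(β p), phi μ₁' σ₁ ζ * Phi μ₂' σ₂ (p / ζ)) := by
  intro p hp
  obtain ⟨hp1, hp2⟩ := hp
  have hp0 : 0 < p := lt_of_lt_of_le (by positivity) hp1
  have hU₂0 : 0 < U₂ := lt_trans hL₂ hU₂
  have hΔ₁ : 0 < Phi μ₁' σ₁ U₁ - Phi μ₁' σ₁ L₁ := sub_pos.mpr (Phi_lt _ _ hσ₁ hU₁)
  have hΔ₂ : 0 < Phi μ₂' σ₂ U₂ - Phi μ₂' σ₂ L₂ := sub_pos.mpr (Phi_lt _ _ hσ₂ hU₂)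
  have hD₁0 : 0 < D₁ := hD₁ ▸ inv_pos.mpr hΔ₁
  have hD₂0 : 0 < D₂ := hD₂ ▸ inv_pos.mpr hΔ₂
  have hαp := hα p
  have hβp := hβ p
  -- basic facts about α and β
  have hLα : L₁ ≤ α p := by
    rw [hαp]; split_ifs with h
    · exact le_rfl
    · push_neg at h; rw [le_div_iff₀ hU₂0]; exact h
  have hα0 : 0 < α p := lt_of_lt_of_le hL₁ hLα
  have hβU : β p ≤ U₁ := by
    rw [hβp]; split_ifs with h
    · rw [div_le_iff₀ hL₂]; exact h.le
    · exact le_rfl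
  have hαβ : α p ≤ β p := by
    rw [hαp, hβp]; split_ifs with h1 h2
    · rw [le_div_iff₀ hL₂]; exact hp1
    · exact hU₁.le
    · exact div_le_div_of_nonneg_left hp0.le hL₂ hU₂.le
    · rw [div_le_iff₀ hU₂0]; exact hp2
  have key1 : ∀ x, L₁ ≤ x → x < α p → x * U₂ ≤ p := by
    intro x h1 h2
    rw [hαp] at h2; split_ifs at h2 with h
    · linarith
    · exact ((lt_div_iff₀ hU₂0).mp h2).le
  have key2a : ∀ x, 0 < x → x ≤ β p → L₂ ≤ p / x := by
    intro x hx h2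
    rw [hβp] at h2; split_ifs at h2 with h
    · rw [le_div_iff₀ hx]; have := (le_div_iff₀ hL₂).mp h2; linarith
    · push_neg at h; rw [le_div_iff₀ hx]; nlinarith
  have key2b : ∀ x, α p ≤ x → p / x ≤ U₂ := by
    intro x h2
    have hx : 0 < x := lt_of_lt_of_le hα0 h2
    rw [hαp] at h2; split_ifs at h2 with h
    · rw [div_le_iff₀ hx]; nlinarith
    · rw [div_le_iff₀ hx]; have := (div_le_iff₀ hU₂0).mp h2; nlinarith
  have key3 : ∀ x, β p < x → x ≤ U₁ → p / x ≤ L₂ := by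
    intro x h2 h3
    have hx : 0 < x := lt_trans (lt_of_lt_of_le hα0 hαβ) h2
    rw [hβp] at h2; split_ifs at h2 with h
    · rw [div_le_iff₀ hx]; have := (div_lt_iff₀ hL₂).mp h2; nlinarith
    · linarith
  -- measure-theoretic setup
  haveI hprob₂ : IsProbabilityMeasure (Measure.map X₂ ℙ) :=
    Measure.isProbabilityMeasure_map hm₂.aemeasurable
  have hS : MeasurableSet {q : ℝ × ℝ | q.1 * q.2 ≤ p} :=
    measurableSet_le (measurable_fst.mul measurable_snd) measurable_const
  have hmassR : D₂ * (Phi μ₂' σ₂ U₂ - Phi μ₂' σ₂ L₂) = 1 := by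
    have hmass : (Measure.map X₂ ℙ) Set.univ = 1 := measure_univ
    rw [hlaw₂, nu_univ _ _ _ _ _ hD₂0.le hU₂.le] at hmass
    rwa [ENNReal.ofReal_eq_one] at hmass
  have hg : Measurable fun x => (Measure.map X₂ ℙ) {y | x * y ≤ p} := by
    have := measurable_measure_prodMk_left (ν := Measure.map X₂ ℙ) hS
    simpa [Set.preimage_setOf_eq] using this
  have e1 : ℙ {ω | X₁ ω * X₂ ω ≤ p}
      = ∫⁻ x, (fun x => ENNReal.ofReal
            ((Set.Icc L₁ U₁).indicator (fun t => D₁ * phi μ₁' σ₁ t) x)) x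
          * (Measure.map X₂ ℙ) {y | x * y ≤ p} := by
    have hmap := (indepFun_iff_map_prod_eq_prod_map_map hm₁.aemeasurable hm₂.aemeasurable).mp hindep
    have h0 : {ω | X₁ ω * X₂ ω ≤ p} = (fun ω => (X₁ ω, X₂ ω)) ⁻¹' {q : ℝ × ℝ | q.1 * q.2 ≤ p} := rfl
    rw [h0, ← Measure.map_apply (hm₁.prodMk hm₂) hS, hmap, Measure.prod_apply hS]
    have h1 : ∀ x : ℝ, Prod.mk x ⁻¹' {q : ℝ × ℝ | q.1 * q.2 ≤ p} = {y | x * y ≤ p} := fun x => rfl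
    simp_rw [h1]
    have hf₁ : Measurable fun x =>
        ENNReal.ofReal ((Set.Icc L₁ U₁).indicator (fun t => D₁ * phi μ₁' σ₁ t) x) :=
      (((measurable_phi μ₁' σ₁).const_mul D₁).indicator measurableSet_Icc).ennreal_ofReal
    rw [hlaw₁, lintegral_withDensity_eq_lintegral_mul volume hf₁ hg]
    rfl
  -- restrict to the support and split
  have e2 : ℙ {ω | X₁ ω * X₂ ω ≤ p}
      = ∫⁻ x in Set.Icc L₁ U₁,
          ENNReal.ofReal (D₁ * phi μ₁' σ₁ x) * (Measure.map X₂ ℙ) {y | x * y ≤ p} := by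
    rw [e1, ← lintegral_indicator measurableSet_Icc]
    refine lintegral_congr fun x => ?_
    by_cases hx : x ∈ Set.Icc L₁ U₁ <;>
      simp [Set.indicator_of_mem, Set.indicator_of_notMem, hx]
  have hsplit : Set.Icc L₁ U₁ = (Set.Ico L₁ (α p) ∪ Set.Icc (α p) (β p)) ∪ Set.Ioc (β p) U₁ := by
    rw [Set.Ico_union_Icc_eq_Icc hLα hαβ, Set.Icc_union_Ioc_eq_Icc (hLα.trans hαβ) hβU]
  have hd1 : Disjoint (Set.Ico L₁ (α p)) (Set.Icc (α p) (β p)) := by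
    refine Set.disjoint_left.mpr ?_
    rintro x ⟨_, h2⟩ ⟨h3, _⟩; exact absurd h3 (not_le.mpr h2)
  have hd2 : Disjoint (Set.Ico L₁ (α p) ∪ Set.Icc (α p) (β p)) (Set.Ioc (β p) U₁) := by
    refine Set.disjoint_left.mpr ?_
    rintro x hx ⟨h3, _⟩
    rcases hx with ⟨_, h2⟩ | ⟨_, h2⟩
    · have := hαβ; linarith
    · linarith
  -- values of the inner measure on each region
  have hg1 : ∀ x ∈ Set.Ico L₁ (α p), (Measure.map X₂ ℙ) {y | x * y ≤ p} = 1 := by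
    intro x hx
    have hx0 : 0 < x := lt_of_lt_of_le hL₁ hx.1
    have hsub : Set.Iic U₂ ⊆ {y | x * y ≤ p} := by
      intro y hy
      simp only [Set.mem_Iic] at hy
      simp only [Set.mem_setOf_eq]
      have h1 : x * U₂ ≤ p := key1 x hx.1 hx.2
      nlinarith
    refine le_antisymm (le_trans (measure_mono (Set.subset_univ _)) measure_univ.le) ?_
    have h2 : (Measure.map X₂ ℙ) (Set.Iic U₂) = 1 := by
      rw [hlaw₂, nu_Iic _ _ _ _ _ hD₂0.le hU₂.le le_rfl, hmassR, ENNReal.ofReal_one]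
    exact h2 ▸ measure_mono hsub
  have hsetIic : ∀ x : ℝ, 0 < x → {y : ℝ | x * y ≤ p} = Set.Iic (p / x) := by
    intro x hx
    ext y
    simp only [Set.mem_setOf_eq, Set.mem_Iic]
    rw [le_div_iff₀ hx]
    constructor <;> intro h <;> linarith
  have hg2 : ∀ x ∈ Set.Icc (α p) (β p), (Measure.map X₂ ℙ) {y | x * y ≤ p}
      = ENNReal.ofReal (D₂ * (Phi μ₂' σ₂ (p / x) - Phi μ₂' σ₂ L₂)) := by
    intro x hx
    have hx0 : 0 < x := lt_of_lt_of_le hα0 hx.1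
    rw [hsetIic x hx0, hlaw₂]
    exact nu_Iic _ _ _ _ _ hD₂0.le (key2a x hx0 hx.2) (key2b x hx.1)
  have hg3 : ∀ x ∈ Set.Ioc (β p) U₁, (Measure.map X₂ ℙ) {y | x * y ≤ p} = 0 := by
    intro x hx
    have hx0 : 0 < x := lt_trans (lt_of_lt_of_le hα0 hαβ) hx.1
    rw [hsetIic x hx0, hlaw₂]
    exact nu_Iic_zero _ _ _ _ _ (key3 x hx.1 hx.2)
  -- the three pieces
  have I1 : ∫⁻ x in Set.Ico L₁ (α p),
      ENNReal.ofReal (D₁ * phi μ₁' σ₁ x) * (Measure.map X₂ ℙ) {y | x * y ≤ p}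
      = ENNReal.ofReal (D₁ * (Phi μ₁' σ₁ (α p) - Phi μ₁' σ₁ L₁)) := by
    rw [setLIntegral_congr_fun measurableSet_Ico
      (fun x hx => by rw [hg1 x hx, mul_one])]
    rw [setLIntegral_congr Ico_ae_eq_Icc]
    exact lint_Icc _ _ _ hD₁0.le hLα
  have hcont : ContinuousOn (fun x => (D₁ * phi μ₁' σ₁ x) *
      (D₂ * (Phi μ₂' σ₂ (p / x) - Phi μ₂' σ₂ L₂))) (Set.Icc (α p) (β p)) := by
    refine ContinuousOn.mul (continuous_const.mul (continuous_phi μ₁' σ₁)).continuousOn ?_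
    refine continuousOn_const.mul (ContinuousOn.sub ?_ continuousOn_const)
    exact (continuous_Phi μ₂' σ₂).comp_continuousOn
      (continuousOn_const.div continuousOn_id fun x hx => ne_of_gt (lt_of_lt_of_le hα0 hx.1))
  have hnn : ∀ x ∈ Set.Icc (α p) (β p),
      0 ≤ (D₁ * phi μ₁' σ₁ x) * (D₂ * (Phi μ₂' σ₂ (p / x) - Phi μ₂' σ₂ L₂)) := by
    intro x hx
    have hx0 : 0 < x := lt_of_lt_of_le hα0 hx.1
    exact mul_nonneg (mul_nonneg hD₁0.le (phi_nonneg _ _ _))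
      (mul_nonneg hD₂0.le (sub_nonneg.mpr (Phi_mono _ _ (key2a x hx0 hx.2))))
  have I2 : ∫⁻ x in Set.Icc (α p) (β p),
      ENNReal.ofReal (D₁ * phi μ₁' σ₁ x) * (Measure.map X₂ ℙ) {y | x * y ≤ p}
      = ENNReal.ofReal (∫ x in Set.Icc (α p) (β p),
          (D₁ * phi μ₁' σ₁ x) * (D₂ * (Phi μ₂' σ₂ (p / x) - Phi μ₂' σ₂ L₂))) := by
    rw [setLIntegral_congr_fun measurableSet_Icc (fun x hx => by
      rw [hg2 x hx, ← ENNReal.ofReal_mul (mul_nonneg hD₁0.le (phi_nonneg _ _ _))])]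
    rw [← ofReal_integral_eq_lintegral_ofReal (hcont.integrableOn_compact isCompact_Icc)
      (ae_restrict_of_forall_mem measurableSet_Icc hnn)]
  have I3 : ∫⁻ x in Set.Ioc (β p) U₁,
      ENNReal.ofReal (D₁ * phi μ₁' σ₁ x) * (Measure.map X₂ ℙ) {y | x * y ≤ p} = 0 := by
    rw [setLIntegral_congr_fun measurableSet_Ioc
      (fun x hx => by rw [hg3 x hx, mul_zero])]
    exact lintegral_zero
  -- combine
  set r₁ := D₁ * (Phi μ₁' σ₁ (α p) - Phi μ₁' σ₁ L₁) with hr₁def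
  set r₂ := ∫ x in Set.Icc (α p) (β p),
      (D₁ * phi μ₁' σ₁ x) * (D₂ * (Phi μ₂' σ₂ (p / x) - Phi μ₂' σ₂ L₂)) with hr₂def
  have hr₁nn : 0 ≤ r₁ := mul_nonneg hD₁0.le (sub_nonneg.mpr (Phi_mono _ _ hLα))
  have hr₂nn : 0 ≤ r₂ := setIntegral_nonneg measurableSet_Icc hnn
  have etotal : ℙ {ω | X₁ ω * X₂ ω ≤ p} = ENNReal.ofReal (r₁ + r₂) := by
    rw [e2, hsplit, lintegral_union measurableSet_Ioc hd2,
      lintegral_union measurableSet_Icc hd1, I1, I2, I3, add_zero,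
      ← ENNReal.ofReal_add hr₁nn hr₂nn]
  rw [etotal, ENNReal.toReal_ofReal (by linarith)]
  -- final algebra
  have hii1 : IntervalIntegrable (fun x => phi μ₁' σ₁ x * Phi μ₂' σ₂ (p / x))
      volume (α p) (β p) := by
    apply ContinuousOn.intervalIntegrable
    rw [Set.uIcc_of_le hαβ]
    exact (continuous_phi _ _).continuousOn.mul ((continuous_Phi μ₂' σ₂).comp_continuousOn
      (continuousOn_const.div continuousOn_id fun x hx => ne_of_gt (lt_of_lt_of_le hα0 hx.1)))
  have hii2 : IntervalIntegrable (phi μ₁' σ₁) volume (α p) (β p) :=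
    (integrable_phi _ _).intervalIntegrable
  have hr₂' : r₂ = D₁ * D₂ * (∫ ζ in (α p)..(β p), phi μ₁' σ₁ ζ * Phi μ₂' σ₂ (p / ζ))
      - D₁ * D₂ * Phi μ₂' σ₂ L₂ * (Phi μ₁' σ₁ (β p) - Phi μ₁' σ₁ (α p)) := by
    have h0 : r₂ = ∫ x in (α p)..(β p),
        (D₁ * phi μ₁' σ₁ x) * (D₂ * (Phi μ₂' σ₂ (p / x) - Phi μ₂' σ₂ L₂)) := by
      rw [intervalIntegral.integral_of_le hαβ, ← integral_Icc_eq_integral_Ioc, hr₂def]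
    rw [h0]
    have expand : ∀ x : ℝ, (D₁ * phi μ₁' σ₁ x) * (D₂ * (Phi μ₂' σ₂ (p / x) - Phi μ₂' σ₂ L₂))
        = (D₁ * D₂) * (phi μ₁' σ₁ x * Phi μ₂' σ₂ (p / x))
          - (D₁ * D₂ * Phi μ₂' σ₂ L₂) * phi μ₁' σ₁ x := fun x => by ring
    simp_rw [expand]
    rw [intervalIntegral.integral_sub (hii1.const_mul _) (hii2.const_mul _),
      intervalIntegral.integral_const_mul, intervalIntegral.integral_const_mul, Phi_interval]
  have hr₁' : r₁ = D₁ * (D₂ * (Phi μ₂' σ₂ U₂ - Phi μ₂' σ₂ L₂))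
      * (Phi μ₁' σ₁ (α p) - Phi μ₁' σ₁ L₁) := by
    rw [hmassR]; ring
  rw [hr₂', hr₁']
  ring
end

section
/- The generalized hypervolume improvement Δ(y) := 1_{ndom(P̃)}(y)·Δ⁺(y) + 1_{dom(P̃)}(y)·Δ⁻(y) is componentwise antitone on {y : y ≤ r}: if y ≤ y' componentwise, then Δ(y') ≤ Δ(y). -/
open MeasureTheory Classical

/-- The 2-D hypervolume indicator. -/
noncomputable def HV2 (A : Finset (ℝ × ℝ)) (r : ℝ × ℝ) : ℝ :=
  (volume (⋃ a ∈ A, Set.Icc a r)).toReal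

/-- The negative hypervolume improvement `Δ⁻(y) = −λ₂(dom(P̃) ∩ ndom({y}) ∩ (−∞, r])`. -/
noncomputable def negHVI (Ptilde : Finset (ℝ × ℝ)) (r y : ℝ × ℝ) : ℝ :=
  -(volume ({z : ℝ × ℝ | z ≤ r ∧ ∃ p ∈ Ptilde, p < z} ∩ {z : ℝ × ℝ | ¬ y ≤ z})).toReal

/-- The generalized hypervolume improvement
`Δ(y) = 1_{ndom(P̃)}(y) Δ⁺(y) + 1_{dom(P̃)}(y) Δ⁻(y)`. -/

noncomputable def genHVI (Ptilde : Finset (ℝ × ℝ)) (r y : ℝ × ℝ) : ℝ :=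
  (if ∀ p ∈ Ptilde, ¬ p < y then HV2 (insert y Ptilde) r - HV2 Ptilde r else 0) +
    (if ∃ p ∈ Ptilde, p < y then negHVI Ptilde r y else 0)

lemma biUnion_Icc_ne_top (A : Finset (ℝ × ℝ)) (r : ℝ × ℝ) :
    volume (⋃ a ∈ A, Set.Icc a r) ≠ ⊤ :=
  (measure_biUnion_lt_top A.finite_toSet
    (fun a _ => isCompact_Icc.measure_lt_top)).ne

lemma HV2_mono {A B : Finset (ℝ × ℝ)} (r : ℝ × ℝ) (h : A ⊆ B) :
    HV2 A r ≤ HV2 B r := by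
  apply ENNReal.toReal_mono (biUnion_Icc_ne_top B r)
  exact measure_mono (Set.biUnion_subset_biUnion_left (by exact_mod_cast h))

lemma dom_subset (Ptilde : Finset (ℝ × ℝ)) (r : ℝ × ℝ) :
    {z : ℝ × ℝ | z ≤ r ∧ ∃ p ∈ Ptilde, p < z} ⊆ ⋃ p ∈ Ptilde, Set.Icc p r := by
  rintro z ⟨hzr, p, hp, hpz⟩
  exact Set.mem_biUnion hp ⟨hpz.le, hzr⟩

lemma negHVI_mono (Ptilde : Finset (ℝ × ℝ)) (r : ℝ × ℝ) {y y' : ℝ × ℝ}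
    (h : y ≤ y') : negHVI Ptilde r y' ≤ negHVI Ptilde r y := by
  unfold negHVI
  apply neg_le_neg
  apply ENNReal.toReal_mono
  · exact ne_top_of_le_ne_top (biUnion_Icc_ne_top Ptilde r)
      (measure_mono (Set.inter_subset_left.trans (dom_subset Ptilde r)))
  · apply measure_mono (Set.inter_subset_inter_right _ ?_)
    intro z hz hz'
    exact hz (h.trans hz')

lemma negHVI_nonpos (Ptilde : Finset (ℝ × ℝ)) (r y : ℝ × ℝ) :
    negHVI Ptilde r y ≤ 0 := neg_nonpos.mpr ENNReal.toReal_nonneg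

/-- The generalized hypervolume improvement is componentwise antitone on `{y : y ≤ r}`. -/
theorem genHVI_antitone (Ptilde : Finset (ℝ × ℝ)) (r : ℝ × ℝ)
    (hnd : ∀ p ∈ Ptilde, ∀ q ∈ Ptilde, p ≤ q → p = q)
    (hr : ∀ p ∈ Ptilde, p.1 < r.1 ∧ p.2 < r.2) :
    ∀ y y' : ℝ × ℝ, y' ≤ r → y ≤ y' → genHVI Ptilde r y' ≤ genHVI Ptilde r y := by
  intro y y' hy'r hyy'
  by_cases h1 : ∀ p ∈ Ptilde, ¬ p < y
  · have h1e : ¬ ∃ p ∈ Ptilde, p < y := by push_neg; exact h1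
    by_cases h2 : ∀ p ∈ Ptilde, ¬ p < y'
    · have h2e : ¬ ∃ p ∈ Ptilde, p < y' := by push_neg; exact h2
      simp only [genHVI, if_pos h1, if_pos h2, if_neg h1e, if_neg h2e, add_zero]
      apply sub_le_sub_right
      apply ENNReal.toReal_mono (biUnion_Icc_ne_top _ r)
      apply measure_mono
      intro z hz
      simp only [Finset.set_biUnion_insert] at hz ⊢
      rcases hz with hz | hz
      · exact Or.inl (Set.Icc_subset_Icc_left hyy' hz)
      · exact Or.inr hz
    · have h2e : ∃ p ∈ Ptilde, p < y' := by push_neg at h2; exact h2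
      simp only [genHVI, if_pos h1, if_pos h2e, if_neg h2, if_neg h1e, add_zero, zero_add]
      have hle : negHVI Ptilde r y' ≤ 0 := negHVI_nonpos Ptilde r y'
      have hge : 0 ≤ HV2 (insert y Ptilde) r - HV2 Ptilde r :=
        sub_nonneg.mpr (HV2_mono r (Finset.subset_insert y Ptilde))
      linarith
  · push_neg at h1
    obtain ⟨p, hp, hpy⟩ := h1
    have h1' : ¬ ∀ p ∈ Ptilde, ¬ p < y := by push_neg; exact ⟨p, hp, hpy⟩
    have hpy' : p < y' := lt_of_lt_of_le hpy hyy'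
    have h2' : ¬ ∀ p ∈ Ptilde, ¬ p < y' := by push_neg; exact ⟨p, hp, hpy'⟩
    have he : ∃ p ∈ Ptilde, p < y := ⟨p, hp, hpy⟩
    have he' : ∃ p ∈ Ptilde, p < y' := ⟨p, hp, hpy'⟩
    simp only [genHVI, if_neg h1', if_neg h2', if_pos he, if_pos he', zero_add]
    exact negHVI_mono Ptilde r hyy'
end
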